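/- arXiv:2011.02106 — 5 statements merged into one kernel-verified Lean document; each statement's English description precedes it below -/
import Mathlib

section
/- Let N ≥ 2, α ∈ (1,2), γ = 1 + α/2, ν = γ - α = 1 - α/2, and define the coefficients g_0 = ∑_{ℓ=1}^{N-1}((ℓ+1)^ν - (ℓ-1)^ν)/ℓ^γ + (N^ν - (N-1)^ν)/N^γ + 2ν/(αN^α) and g_k = -((k+1)^ν - (k-1)^ν)/(2k^γ) for k = 1,…,N-2. Then g_0 > 0, g_k < 0 for k ≥ 1, and g_0 > 2∑_{k=1}^{N-2}|g_k|, i.e., the symmetric Toeplitz matrix with diagonal g_0 and off-diagonals g_{|i-j|} is strictly diagonally dominant with positive diagonal. -/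
theorem frac_laplacian_coeffs_diag_dominant
    (N : ℕ) (hN : 2 ≤ N) (α : ℝ) (hα : 1 < α) (hα2 : α < 2)
    (γ ν : ℝ) (hγ : γ = 1 + α / 2) (hν : ν = γ - α)
    (g : ℕ → ℝ)
    (hg0 : g 0 = (∑ ℓ ∈ Finset.Icc 1 (N - 1),
        (((ℓ : ℝ) + 1) ^ ν - ((ℓ : ℝ) - 1) ^ ν) / (ℓ : ℝ) ^ γ)
      + ((N : ℝ) ^ ν - ((N : ℝ) - 1) ^ ν) / (N : ℝ) ^ γ
      + 2 * ν / (α * (N : ℝ) ^ α))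
    (hgk : ∀ k, 1 ≤ k → k ≤ N - 2 →
      g k = -((((k : ℝ) + 1) ^ ν - ((k : ℝ) - 1) ^ ν) / (2 * (k : ℝ) ^ γ))) :
    0 < g 0 ∧ (∀ k, 1 ≤ k → k ≤ N - 2 → g k < 0) ∧
      2 * (∑ k ∈ Finset.Icc 1 (N - 2), |g k|) < g 0 := by
  have hνpos : 0 < ν := by rw [hν, hγ]; linarith
  have hnum : ∀ k : ℕ, 1 ≤ k → 0 < ((k : ℝ) + 1) ^ ν - ((k : ℝ) - 1) ^ ν := by
    intro k hk
    have hk1 : (1:ℝ) ≤ (k:ℝ) := by exact_mod_cast hk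
    have := Real.rpow_lt_rpow (x := (k:ℝ) - 1) (y := (k:ℝ) + 1)
      (by linarith) (by linarith) hνpos
    linarith
  have hden : ∀ k : ℕ, 1 ≤ k → 0 < ((k : ℝ)) ^ γ := by
    intro k hk
    have hk1 : (1:ℝ) ≤ (k:ℝ) := by exact_mod_cast hk
    exact Real.rpow_pos_of_pos (by linarith) _
  have hfpos : ∀ k : ℕ, 1 ≤ k →
      0 < (((k : ℝ) + 1) ^ ν - ((k : ℝ) - 1) ^ ν) / (k : ℝ) ^ γ := by
    intro k hk
    exact div_pos (hnum k hk) (hden k hk)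
  have hN1 : (2:ℝ) ≤ (N:ℝ) := by exact_mod_cast hN
  have hNpow : 0 < (N:ℝ) ^ γ := Real.rpow_pos_of_pos (by linarith) _
  have hNterm : 0 < ((N : ℝ) ^ ν - ((N : ℝ) - 1) ^ ν) / (N : ℝ) ^ γ := by
    have := Real.rpow_lt_rpow (x := (N:ℝ) - 1) (y := (N:ℝ))
      (by linarith) (by linarith) hνpos
    exact div_pos (by linarith) hNpow
  have hlast : 0 < 2 * ν / (α * (N : ℝ) ^ α) := by
    have := Real.rpow_pos_of_pos (x := (N:ℝ)) (by linarith) α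
    positivity
  have hsum_nonneg : 0 ≤ ∑ ℓ ∈ Finset.Icc 1 (N - 1),
      (((ℓ : ℝ) + 1) ^ ν - ((ℓ : ℝ) - 1) ^ ν) / (ℓ : ℝ) ^ γ := by
    apply Finset.sum_nonneg
    intro k hk
    exact le_of_lt (hfpos k (Finset.mem_Icc.mp hk).1)
  have hgkneg : ∀ k, 1 ≤ k → k ≤ N - 2 → g k < 0 := by
    intro k hk1 hk2
    rw [hgk k hk1 hk2]
    have := hnum k hk1
    have := hden k hk1
    have : 0 < (((k : ℝ) + 1) ^ ν - ((k : ℝ) - 1) ^ ν) / (2 * (k : ℝ) ^ γ) :=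
      div_pos (hnum k hk1) (by linarith [hden k hk1])
    linarith
  refine ⟨by rw [hg0]; linarith, hgkneg, ?_⟩
  obtain ⟨M, rfl⟩ : ∃ M, N = M + 2 := ⟨N - 2, by omega⟩
  have hM2 : M + 2 - 2 = M := by omega
  have hM1 : M + 2 - 1 = M + 1 := by omega
  rw [hM2] at *
  rw [hM1] at hg0
  have habs : ∀ k ∈ Finset.Icc 1 M, |g k| =
      (((k : ℝ) + 1) ^ ν - ((k : ℝ) - 1) ^ ν) / (2 * (k : ℝ) ^ γ) := by
    intro k hk
    obtain ⟨hk1, hk2⟩ := Finset.mem_Icc.mp hk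
    rw [hgk k hk1 hk2, abs_neg, abs_of_pos
      (div_pos (hnum k hk1) (by linarith [hden k hk1]))]
  rw [Finset.sum_congr rfl habs, Finset.mul_sum]
  have hsum_eq : ∀ k ∈ Finset.Icc 1 M,
      2 * ((((k : ℝ) + 1) ^ ν - ((k : ℝ) - 1) ^ ν) / (2 * (k : ℝ) ^ γ))
      = (((k : ℝ) + 1) ^ ν - ((k : ℝ) - 1) ^ ν) / (k : ℝ) ^ γ := by
    intro k hk
    rw [mul_div_assoc']
    rw [mul_div_mul_left _ _ (two_ne_zero)]
  rw [Finset.sum_congr rfl hsum_eq]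
  have hsplit := Finset.sum_Icc_succ_top (a := 1) (b := M) (by omega)
    (fun k : ℕ => (((k : ℝ) + 1) ^ ν - ((k : ℝ) - 1) ^ ν) / (k : ℝ) ^ γ)
  rw [hg0, hsplit]
  have := hfpos (M + 1) (by omega)
  push_cast at this hNterm hlast ⊢
  linarith
end

section
/- Let G be the (N-1)×(N-1) symmetric Toeplitz matrix with entries G_{ij} = -c·g_{i-j}, where c > 0 and the g_k are the fractional Laplacian discretization coefficients with g_{-k} = g_k. Then -G is symmetric positive definite. -/
open Finset

lemma posDef_of_diag_dominant {n : Type*} [Fintype n] [DecidableEq n]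
    (A : Matrix n n ℝ) (hsym : A.IsHermitian)
    (h : ∀ i, ∑ j ∈ Finset.univ.erase i, |A i j| < A i i) :
    A.PosDef := by
  have hAA : ∀ i j, A i j = A j i := by
    intro i j
    have := hsym.apply i j
    simpa using this.symm
  refine Matrix.PosDef.of_dotProduct_mulVec_pos hsym fun x hx => ?_
  obtain ⟨i0, hi0⟩ : ∃ i, x i ≠ 0 := by
    by_contra hall; push_neg at hall; exact hx (funext hall)
  have expand : dotProduct (star x) (A.mulVec x)
      = ∑ i, A i i * (x i * x i) + ∑ i, ∑ j ∈ Finset.univ.erase i, A i j * (x i * x j) := by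
    rw [← Finset.sum_add_distrib]
    simp only [dotProduct, Matrix.mulVec, Pi.star_apply, star_trivial]
    refine Finset.sum_congr rfl fun i _ => ?_
    rw [Finset.mul_sum, ← Finset.add_sum_erase _ _ (Finset.mem_univ i)]
    congr 1
    · ring
    · exact Finset.sum_congr rfl fun j _ => by ring
  set T1 := ∑ i, ∑ j ∈ Finset.univ.erase i, (|A i j| * (x i * x i) / 2) with hT1
  set T2 := ∑ i, ∑ j ∈ Finset.univ.erase i, (|A i j| * (x j * x j) / 2) with hT2
  have hswap : T2 = T1 := by
    rw [hT2, Finset.sum_comm' (t' := Finset.univ) (s' := fun j => Finset.univ.erase j)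
      (by intro a b; simp [eq_comm, ne_comm, and_comm])]
    refine Finset.sum_congr rfl fun j _ => Finset.sum_congr rfl fun i _ => ?_
    rw [hAA i j]
  have hcross : -(T1 + T2) ≤ ∑ i, ∑ j ∈ Finset.univ.erase i, A i j * (x i * x j) := by
    have hTT : T1 + T2 = ∑ i, ∑ j ∈ Finset.univ.erase i,
        (|A i j| * (x i * x i) / 2 + |A i j| * (x j * x j) / 2) := by
      rw [hT1, hT2, ← Finset.sum_add_distrib]
      exact Finset.sum_congr rfl fun i _ => (Finset.sum_add_distrib).symm
    rw [hTT, ← Finset.sum_neg_distrib]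
    refine Finset.sum_le_sum fun i _ => ?_
    rw [← Finset.sum_neg_distrib]
    refine Finset.sum_le_sum fun j _ => ?_
    have h1 : |A i j * (x i * x j)| ≤ |A i j| * (x i * x i) / 2 + |A i j| * (x j * x j) / 2 := by
      rw [abs_mul, abs_mul]
      nlinarith [sq_nonneg (|x i| - |x j|), abs_nonneg (A i j), sq_abs (x i), sq_abs (x j),
        abs_nonneg (x i), abs_nonneg (x j)]
    have h2 := neg_abs_le (A i j * (x i * x j))
    linarith
  have hdiag : ∑ i, (∑ j ∈ Finset.univ.erase i, |A i j|) * (x i * x i) = T1 + T2 := by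
    rw [hswap, hT1, ← two_mul, Finset.mul_sum]
    refine Finset.sum_congr rfl fun i _ => ?_
    rw [Finset.sum_mul, Finset.mul_sum]
    exact Finset.sum_congr rfl fun j _ => by ring
  have hpos : 0 < ∑ i, (A i i - ∑ j ∈ Finset.univ.erase i, |A i j|) * (x i * x i) := by
    refine Finset.sum_pos' (fun i _ => ?_) ⟨i0, Finset.mem_univ i0, ?_⟩
    · exact mul_nonneg (le_of_lt (sub_pos.mpr (h i))) (mul_self_nonneg _)
    · exact mul_pos (sub_pos.mpr (h i0)) (mul_self_pos.mpr hi0)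
  have hsplit : ∑ i, (A i i - ∑ j ∈ Finset.univ.erase i, |A i j|) * (x i * x i)
      = ∑ i, A i i * (x i * x i) - (T1 + T2) := by
    rw [← hdiag, ← Finset.sum_sub_distrib]
    exact Finset.sum_congr rfl fun i _ => by ring
  rw [expand]
  linarith

theorem negG_posDef
    (N : ℕ) (hN : 2 ≤ N) (α : ℝ) (hα : 1 < α) (hα2 : α < 2)
    (γ ν : ℝ) (hγ : γ = 1 + α / 2) (hν : ν = γ - α)
    (c : ℝ) (hc : 0 < c)
    (g : ℤ → ℝ)
    (hgsym : ∀ k : ℤ, g (-k) = g k)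
    (hg0 : g 0 = (∑ ℓ ∈ Finset.Icc 1 (N - 1),
        (((ℓ : ℝ) + 1) ^ ν - ((ℓ : ℝ) - 1) ^ ν) / (ℓ : ℝ) ^ γ)
      + ((N : ℝ) ^ ν - ((N : ℝ) - 1) ^ ν) / (N : ℝ) ^ γ
      + 2 * ν / (α * (N : ℝ) ^ α))
    (hgk : ∀ k : ℕ, 1 ≤ k → k ≤ N - 2 →
      g k = -((((k : ℝ) + 1) ^ ν - ((k : ℝ) - 1) ^ ν) / (2 * (k : ℝ) ^ γ)))
    (G : Matrix (Fin (N - 1)) (Fin (N - 1)) ℝ)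
    (hG : ∀ i j : Fin (N - 1), G i j = -c * g ((i : ℤ) - (j : ℤ))) :
    (-G).PosDef := by
  have hν0 : 0 < ν := by rw [hν, hγ]; linarith
  -- the off-diagonal magnitude function
  set f : ℕ → ℝ := fun k => (((k : ℝ) + 1) ^ ν - ((k : ℝ) - 1) ^ ν) / (2 * (k : ℝ) ^ γ) with hf
  have ha : ∀ k : ℕ, 1 ≤ k → 0 ≤ ((k : ℝ) + 1) ^ ν - ((k : ℝ) - 1) ^ ν := by
    intro k hk
    have hk1 : (1 : ℝ) ≤ (k : ℝ) := by exact_mod_cast hk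
    have := Real.rpow_le_rpow (by linarith : (0:ℝ) ≤ (k:ℝ) - 1) (by linarith : (k:ℝ) - 1 ≤ (k:ℝ) + 1) hν0.le
    linarith
  have hkpow : ∀ k : ℕ, 1 ≤ k → 0 < (k : ℝ) ^ γ := by
    intro k hk
    have hk1 : (1 : ℝ) ≤ (k : ℝ) := by exact_mod_cast hk
    exact Real.rpow_pos_of_pos (by linarith) γ
  have hf0 : ∀ k : ℕ, 1 ≤ k → 0 ≤ f k := by
    intro k hk
    exact div_nonneg (ha k hk) (by linarith [hkpow k hk])
  have habs : ∀ k : ℕ, 1 ≤ k → k ≤ N - 2 → |g (k : ℕ)| = f k := by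
    intro k hk hk2
    rw [hgk k hk hk2, abs_neg, abs_of_nonneg (hf0 k hk)]
  -- bound each row sum
  have hrow : ∀ i : Fin (N - 1), ∑ j ∈ Finset.univ.erase i, |g ((i : ℤ) - (j : ℤ))|
      ≤ 2 * ∑ k ∈ Finset.Icc 1 (N - 2), f k := by
    intro i
    have hsplitset : Finset.univ.erase i
        = (Finset.univ.filter fun j : Fin (N-1) => (j : ℕ) < (i : ℕ))
          ∪ (Finset.univ.filter fun j : Fin (N-1) => (i : ℕ) < (j : ℕ)) := by
      ext j
      simp only [Finset.mem_erase, Finset.mem_union, Finset.mem_filter, Finset.mem_univ,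
        true_and, and_true, Fin.ext_iff, ne_eq]
      omega
    have hdisj : Disjoint (Finset.univ.filter fun j : Fin (N-1) => (j : ℕ) < (i : ℕ))
        (Finset.univ.filter fun j : Fin (N-1) => (i : ℕ) < (j : ℕ)) := by
      rw [Finset.disjoint_filter]
      intro j _ h1
      omega
    rw [hsplitset, Finset.sum_union hdisj, two_mul]
    have hb1 : ∑ j ∈ Finset.univ.filter (fun j : Fin (N-1) => (j : ℕ) < (i : ℕ)),
        |g ((i : ℤ) - (j : ℤ))| ≤ ∑ k ∈ Finset.Icc 1 (N - 2), f k := by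
      have hre : ∀ j ∈ Finset.univ.filter (fun j : Fin (N-1) => (j : ℕ) < (i : ℕ)),
          |g ((i : ℤ) - (j : ℤ))| = f ((i : ℕ) - (j : ℕ)) := by
        intro j hj
        rw [Finset.mem_filter] at hj
        have hji : (j : ℕ) < (i : ℕ) := hj.2
        have hik : (i : ℤ) - (j : ℤ) = (((i : ℕ) - (j : ℕ) : ℕ) : ℤ) := by
          push_cast; omega
        rw [hik]
        exact habs _ (by omega) (by omega)
      rw [Finset.sum_congr rfl hre]
      rw [← Finset.sum_image (g := fun j : Fin (N-1) => (i : ℕ) - (j : ℕ))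
        (fun a ha' b hb' hab => by
          simp only [Finset.mem_coe, Finset.mem_filter] at ha' hb'
          simp only at hab
          have := a.isLt; have := b.isLt
          exact Fin.ext (by omega))]
      refine Finset.sum_le_sum_of_subset_of_nonneg ?_ (fun k hk _ => hf0 k (Finset.mem_Icc.mp hk).1)
      intro k hk
      simp only [Finset.mem_image, Finset.mem_filter] at hk
      obtain ⟨j, ⟨_, hji⟩, rfl⟩ := hk
      have := i.isLt
      exact Finset.mem_Icc.mpr ⟨by omega, by omega⟩
    have hb2 : ∑ j ∈ Finset.univ.filter (fun j : Fin (N-1) => (i : ℕ) < (j : ℕ)),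
        |g ((i : ℤ) - (j : ℤ))| ≤ ∑ k ∈ Finset.Icc 1 (N - 2), f k := by
      have hre : ∀ j ∈ Finset.univ.filter (fun j : Fin (N-1) => (i : ℕ) < (j : ℕ)),
          |g ((i : ℤ) - (j : ℤ))| = f ((j : ℕ) - (i : ℕ)) := by
        intro j hj
        rw [Finset.mem_filter] at hj
        have hji : (i : ℕ) < (j : ℕ) := hj.2
        have hsy : g ((i : ℤ) - (j : ℤ)) = g ((j : ℤ) - (i : ℤ)) := by
          rw [← hgsym ((j : ℤ) - (i : ℤ))]; ring_nf
        have hik : (j : ℤ) - (i : ℤ) = (((j : ℕ) - (i : ℕ) : ℕ) : ℤ) := by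
          push_cast; omega
        rw [hsy, hik]
        have := j.isLt
        exact habs _ (by omega) (by omega)
      rw [Finset.sum_congr rfl hre]
      rw [← Finset.sum_image (g := fun j : Fin (N-1) => (j : ℕ) - (i : ℕ))
        (fun a ha' b hb' hab => by
          simp only [Finset.mem_coe, Finset.mem_filter] at ha' hb'
          simp only at hab
          exact Fin.ext (by omega))]
      refine Finset.sum_le_sum_of_subset_of_nonneg ?_ (fun k hk _ => hf0 k (Finset.mem_Icc.mp hk).1)
      intro k hk
      simp only [Finset.mem_image, Finset.mem_filter] at hk
      obtain ⟨j, ⟨_, hji⟩, rfl⟩ := hk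
      have := j.isLt
      exact Finset.mem_Icc.mpr ⟨by omega, by omega⟩
    exact add_le_add hb1 hb2
  -- g 0 dominates
  have hN2 : (2 : ℝ) ≤ (N : ℝ) := by exact_mod_cast hN
  have hg0big : 2 * ∑ k ∈ Finset.Icc 1 (N - 2), f k < g 0 := by
    have hsum : ∑ ℓ ∈ Finset.Icc 1 (N - 1),
        (((ℓ : ℝ) + 1) ^ ν - ((ℓ : ℝ) - 1) ^ ν) / (ℓ : ℝ) ^ γ
        = 2 * ∑ ℓ ∈ Finset.Icc 1 (N - 1), f ℓ := by
      rw [Finset.mul_sum]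
      refine Finset.sum_congr rfl fun ℓ hℓ => ?_
      have hℓ1 := (Finset.mem_Icc.mp hℓ).1
      have := hkpow ℓ hℓ1
      rw [hf]
      field_simp
    have hmono : ∑ k ∈ Finset.Icc 1 (N - 2), f k ≤ ∑ ℓ ∈ Finset.Icc 1 (N - 1), f ℓ := by
      refine Finset.sum_le_sum_of_subset_of_nonneg ?_ (fun k hk _ => hf0 k (Finset.mem_Icc.mp hk).1)
      exact Finset.Icc_subset_Icc_right (by omega)
    have ht1 : 0 ≤ ((N : ℝ) ^ ν - ((N : ℝ) - 1) ^ ν) / (N : ℝ) ^ γ := by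
      have := Real.rpow_le_rpow (by linarith : (0:ℝ) ≤ (N:ℝ) - 1) (by linarith : (N:ℝ) - 1 ≤ (N:ℝ)) hν0.le
      exact div_nonneg (by linarith) (Real.rpow_pos_of_pos (by linarith) γ).le
    have ht2 : 0 < 2 * ν / (α * (N : ℝ) ^ α) := by
      have hNα : 0 < (N : ℝ) ^ α := Real.rpow_pos_of_pos (by linarith) α
      positivity
    rw [hg0, hsum]
    linarith
  -- apply Gershgorin-type criterion
  refine posDef_of_diag_dominant _ ?_ ?_
  · ext i j
    simp only [Matrix.conjTranspose_apply, Matrix.neg_apply, hG, star_trivial]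
    have : g ((j : ℤ) - (i : ℤ)) = g ((i : ℤ) - (j : ℤ)) := by
      rw [← hgsym ((i : ℤ) - (j : ℤ))]; ring_nf
    rw [this]
  · intro i
    have : ∀ j, |(-G) i j| = c * |g ((i : ℤ) - (j : ℤ))| := by
      intro j
      rw [Matrix.neg_apply, hG, neg_mul, neg_neg, abs_mul, abs_of_pos hc]
    calc ∑ j ∈ Finset.univ.erase i, |(-G) i j|
        = c * ∑ j ∈ Finset.univ.erase i, |g ((i : ℤ) - (j : ℤ))| := by
          rw [Finset.mul_sum]; exact Finset.sum_congr rfl fun j _ => this j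
      _ ≤ c * (2 * ∑ k ∈ Finset.Icc 1 (N - 2), f k) :=
          mul_le_mul_of_nonneg_left (hrow i) hc.le
      _ < c * g 0 := mul_lt_mul_of_pos_left hg0big hc
      _ = (-G) i i := by rw [Matrix.neg_apply, hG]; simp
end

section
/- Let N be even and let sk(G) be the symmetric skew-circulant matrix of size (N-1) whose first column is -c·[g_0, g_1, …, g_{⌊(N-1)/2⌋}, -g_{N-⌊(N-1)/2⌋-2}, …, -g_1]^T, with c > 0 and the fractional Laplacian coefficients g_k. Then every eigenvalue of sk(G) is real and negative. -/
open Finset Complex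

theorem skew_circulant_eigenvalues_neg
    (N : ℕ) (hN : 2 ≤ N) (hNeven : Even N)
    (α : ℝ) (hα : 1 < α) (hα2 : α < 2)
    (γ ν : ℝ) (hγ : γ = 1 + α / 2) (hν : ν = γ - α)
    (c : ℝ) (hc : 0 < c)
    (g : ℕ → ℝ)
    (hg0 : g 0 = (∑ ℓ ∈ Finset.Icc 1 (N - 1),
        (((ℓ : ℝ) + 1) ^ ν - ((ℓ : ℝ) - 1) ^ ν) / (ℓ : ℝ) ^ γ)
      + ((N : ℝ) ^ ν - ((N : ℝ) - 1) ^ ν) / (N : ℝ) ^ γ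
      + 2 * ν / (α * (N : ℝ) ^ α))
    (hgk : ∀ k, 1 ≤ k → k ≤ N - 2 →
      g k = -((((k : ℝ) + 1) ^ ν - ((k : ℝ) - 1) ^ ν) / (2 * (k : ℝ) ^ γ)))
    -- first column of sk(G): -c • [g 0, g 1, …, g m, -g (n - m - 1), …, -g 1]
    (col : ℕ → ℝ)
    (hcol : ∀ k, k ≤ N - 2 →
      col k = -c * (if k ≤ (N - 1) / 2 then g k else -g (N - 1 - k)))
    (skG : Matrix (Fin (N - 1)) (Fin (N - 1)) ℝ)
    (hskG : ∀ i j : Fin (N - 1),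
      skG i j = if (j : ℕ) ≤ (i : ℕ) then col ((i : ℕ) - (j : ℕ))
        else -col ((i : ℕ) + (N - 1) - (j : ℕ))) :
    ∀ (μ : ℂ) (v : Fin (N - 1) → ℂ), v ≠ 0 →
      (skG.map (Complex.ofReal)).mulVec v = μ • v → μ.im = 0 ∧ μ.re < 0 := by
  intro μ v hv hmul
  obtain ⟨M, hM⟩ := hNeven
  have hν0 : 0 < ν := by rw [hν, hγ]; linarith
  have h0 : 0 < N - 1 := by omega
  -- positivity of the generic summand
  have ht_pos : ∀ k : ℕ, 1 ≤ k →
      0 < (((k : ℝ) + 1) ^ ν - ((k : ℝ) - 1) ^ ν) / (k : ℝ) ^ γ := by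
    intro k hk
    have hk1 : (1 : ℝ) ≤ (k : ℝ) := by exact_mod_cast hk
    have h1 : ((k : ℝ) - 1) ^ ν < ((k : ℝ) + 1) ^ ν :=
      Real.rpow_lt_rpow (by linarith) (by linarith) hν0
    exact div_pos (by linarith) (Real.rpow_pos_of_pos (by linarith) _)
  have hg_neg : ∀ k, 1 ≤ k → k ≤ N - 2 → g k < 0 := by
    intro k h1 h2
    rw [hgk k h1 h2]
    have hk1 : (1 : ℝ) ≤ (k : ℝ) := by exact_mod_cast h1
    have hpos : ((k : ℝ) - 1) ^ ν < ((k : ℝ) + 1) ^ ν :=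
      Real.rpow_lt_rpow (by linarith) (by linarith) hν0
    have hden : (0 : ℝ) < 2 * (k : ℝ) ^ γ := by
      have := Real.rpow_pos_of_pos (show (0:ℝ) < (k:ℝ) by linarith) γ
      linarith
    have := div_pos (show (0:ℝ) < ((k:ℝ)+1)^ν - ((k:ℝ)-1)^ν by linarith) hden
    linarith
  -- the key scalar inequality:  2 ∑_{k=1}^{N-2} (-g k) < g 0
  have hsum : 2 * (∑ k ∈ Icc 1 (N - 2), (-g k)) < g 0 := by
    have he : ∀ k ∈ Icc 1 (N - 2),
        2 * (-g k) = (((k : ℝ) + 1) ^ ν - ((k : ℝ) - 1) ^ ν) / (k : ℝ) ^ γ := by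
      intro k hk
      simp only [mem_Icc] at hk
      rw [hgk k hk.1 hk.2]
      have hk1 : (1 : ℝ) ≤ (k : ℝ) := by exact_mod_cast hk.1
      have hp : ((k : ℝ) ^ γ) ≠ 0 :=
        ne_of_gt (Real.rpow_pos_of_pos (by linarith) _)
      field_simp
    have hL : 2 * (∑ k ∈ Icc 1 (N - 2), (-g k))
        = ∑ k ∈ Icc 1 (N - 2), (((k : ℝ) + 1) ^ ν - ((k : ℝ) - 1) ^ ν) / (k : ℝ) ^ γ := by
      rw [mul_sum]; exact sum_congr rfl he
    rw [hL]
    rw [show N - 1 = (N - 2) + 1 from by omega] at hg0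
    rw [Finset.sum_Icc_succ_top (by omega)] at hg0
    have hN1 : (1 : ℝ) ≤ ((N : ℝ) - 1) := by
      have : (2 : ℝ) ≤ (N : ℝ) := by exact_mod_cast hN
      linarith
    have hA : 0 < ((N : ℝ) ^ ν - ((N : ℝ) - 1) ^ ν) / (N : ℝ) ^ γ := by
      have h1 : ((N : ℝ) - 1) ^ ν < (N : ℝ) ^ ν :=
        Real.rpow_lt_rpow (by linarith) (by linarith) hν0
      exact div_pos (by linarith) (Real.rpow_pos_of_pos (by linarith) _)
    have hB : 0 < 2 * ν / (α * (N : ℝ) ^ α) := by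
      refine div_pos (by linarith) (mul_pos (by linarith) ?_)
      exact Real.rpow_pos_of_pos (by linarith) _
    have hT : 0 < (((N - 2 + 1 : ℕ) : ℝ) + 1) ^ ν - (((N - 2 + 1 : ℕ) : ℝ) - 1) ^ ν := by
      have hk1 : (1 : ℝ) ≤ ((N - 2 + 1 : ℕ) : ℝ) := by
        have : 1 ≤ N - 2 + 1 := by omega
        exact_mod_cast this
      have := Real.rpow_lt_rpow (show (0:ℝ) ≤ ((N-2+1:ℕ):ℝ) - 1 by linarith)
        (show ((N-2+1:ℕ):ℝ) - 1 < ((N-2+1:ℕ):ℝ) + 1 by linarith) hν0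
      linarith
    have hTpos := ht_pos (N - 2 + 1) (by omega)
    linarith [hg0, hTpos]
  -- properties of `col`
  have hm2 : 2 * ((N - 1) / 2) + 1 = N - 1 := by omega
  have hcol0 : col 0 = -(c * g 0) := by
    rw [hcol 0 (by omega), if_pos (Nat.zero_le _)]; ring
  have habs_low : ∀ k, 1 ≤ k → k ≤ (N - 1) / 2 → |col k| = c * (-g k) := by
    intro k h1 h2
    have hg := hg_neg k h1 (by omega)
    rw [hcol k (by omega), if_pos h2, abs_of_pos (by nlinarith)]
    ring
  have habs_high : ∀ k, (N - 1) / 2 < k → k ≤ N - 2 →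
      |col k| = c * (-g (N - 1 - k)) := by
    intro k h1 h2
    have hg := hg_neg (N - 1 - k) (by omega) (by omega)
    rw [hcol k (by omega), if_neg (by omega), abs_of_neg (by nlinarith)]
    ring
  -- skew symmetry of col
  have hskew : ∀ k, 1 ≤ k → k ≤ N - 2 → col (N - 1 - k) = -col k := by
    intro k h1 h2
    by_cases h : k ≤ (N - 1) / 2
    · rw [hcol (N - 1 - k) (by omega), hcol k (by omega), if_pos h,
        if_neg (by omega), show N - 1 - (N - 1 - k) = k from by omega]
      ring
    · rw [hcol (N - 1 - k) (by omega), hcol k (by omega), if_neg h,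
        if_pos (by omega)]
      ring
  -- symmetry of skG
  have hsym : ∀ i j : Fin (N - 1), skG i j = skG j i := by
    intro i j
    have hi := i.isLt
    have hj := j.isLt
    rcases lt_trichotomy (j : ℕ) (i : ℕ) with h | h | h
    · rw [hskG i j, hskG j i, if_pos (le_of_lt h), if_neg (by omega),
        show (j : ℕ) + (N - 1) - (i : ℕ) = N - 1 - ((i : ℕ) - (j : ℕ)) from by omega,
        hskew ((i : ℕ) - (j : ℕ)) (by omega) (by omega)]
      ring
    · rw [hskG i j, hskG j i, if_pos (le_of_eq h.symm), if_pos (le_of_eq h), h]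
    · rw [hskG i j, hskG j i, if_pos (le_of_lt h), if_neg (by omega),
        show (i : ℕ) + (N - 1) - (j : ℕ) = N - 1 - ((j : ℕ) - (i : ℕ)) from by omega,
        hskew ((j : ℕ) - (i : ℕ)) (by omega) (by omega)]
      ring
  -- the eigen-equation, componentwise
  have heq : ∀ i, (∑ j, (skG i j : ℂ) * v j) = μ * v i := by
    intro i
    have := congrFun hmul i
    simpa [Matrix.mulVec, dotProduct, Matrix.map_apply, Pi.smul_apply,
      smul_eq_mul] using this
  -- Part 1 : μ is real
  have him : μ.im = 0 := by
    set T : ℂ := ∑ i, (starRingEnd ℂ) (v i) * v i with hT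
    have h1 : μ * T = ∑ i, ∑ j, (skG i j : ℂ) * ((starRingEnd ℂ) (v i) * v j) := by
      rw [hT, mul_sum]
      refine sum_congr rfl fun i _ => ?_
      calc μ * ((starRingEnd ℂ) (v i) * v i)
          = (starRingEnd ℂ) (v i) * (μ * v i) := by ring
        _ = (starRingEnd ℂ) (v i) * ∑ j, (skG i j : ℂ) * v j := by rw [heq i]
        _ = ∑ j, (skG i j : ℂ) * ((starRingEnd ℂ) (v i) * v j) := by
            rw [mul_sum]; exact sum_congr rfl fun j _ => by ring
    have hconj : (starRingEnd ℂ) (μ * T) = μ * T := by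
      calc (starRingEnd ℂ) (μ * T)
          = ∑ i, ∑ j, (skG i j : ℂ) * (v i * (starRingEnd ℂ) (v j)) := by
            rw [h1, map_sum]
            refine sum_congr rfl fun i _ => ?_
            rw [map_sum]
            refine sum_congr rfl fun j _ => ?_
            rw [map_mul, map_mul, Complex.conj_ofReal, Complex.conj_conj]
        _ = ∑ i, ∑ j, (skG j i : ℂ) * (v i * (starRingEnd ℂ) (v j)) := by
            refine sum_congr rfl fun i _ => sum_congr rfl fun j _ => ?_
            rw [hsym i j]
        _ = ∑ j, ∑ i, (skG j i : ℂ) * (v i * (starRingEnd ℂ) (v j)) :=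
            Finset.sum_comm
        _ = ∑ i, ∑ j, (skG i j : ℂ) * ((starRingEnd ℂ) (v i) * v j) := by
            refine sum_congr rfl fun i _ => sum_congr rfl fun j _ => by ring
        _ = μ * T := h1.symm
    have hTr : T = ((∑ i, Complex.normSq (v i) : ℝ) : ℂ) := by
      rw [hT]
      push_cast
      exact sum_congr rfl fun i _ => (Complex.normSq_eq_conj_mul_self (z := v i)).symm ▸ rfl
    have hTne : T ≠ 0 := by
      rw [hTr]
      obtain ⟨j, hvj⟩ := Function.ne_iff.mp hv
      have hpos : 0 < ∑ i, Complex.normSq (v i) := by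
        refine Finset.sum_pos' (fun i _ => Complex.normSq_nonneg _) ⟨j, mem_univ _, ?_⟩
        exact Complex.normSq_pos.mpr hvj
      exact_mod_cast ne_of_gt hpos
    have hconjT : (starRingEnd ℂ) T = T := by
      rw [hTr, Complex.conj_ofReal]
    rw [map_mul, hconjT] at hconj
    have : (starRingEnd ℂ) μ = μ := mul_right_cancel₀ hTne hconj
    have := Complex.conj_eq_iff_im.mp this
    exact this
  refine ⟨him, ?_⟩
  -- Part 2 : Gershgorin
  have : Nonempty (Fin (N - 1)) := ⟨⟨0, h0⟩⟩
  obtain ⟨i₀, -, hmax⟩ := Finset.exists_max_image (univ : Finset (Fin (N - 1)))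
    (fun i => ‖v i‖) Finset.univ_nonempty
  have hvi : 0 < ‖v i₀‖ := by
    obtain ⟨j, hvj⟩ := Function.ne_iff.mp hv
    exact lt_of_lt_of_le (by simpa using hvj : 0 < ‖v j‖) (hmax j (mem_univ _))
  have hii : skG i₀ i₀ = -(c * g 0) := by
    rw [hskG i₀ i₀, if_pos le_rfl, Nat.sub_self, hcol0]
  -- row-sum identity
  have hmod : ∀ k, 1 ≤ k → k ≤ N - 2 →
      ((i₀ : ℕ) + (N - 1) - k) % (N - 1)
        = if k ≤ (i₀ : ℕ) then (i₀ : ℕ) - k else (i₀ : ℕ) + (N - 1) - k := by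
    intro k h1 h2
    have hlt := i₀.isLt
    by_cases h : k ≤ (i₀ : ℕ)
    · rw [if_pos h, show (i₀ : ℕ) + (N - 1) - k = ((i₀ : ℕ) - k) + (N - 1) from by omega,
        Nat.add_mod_right]
      exact Nat.mod_eq_of_lt (by omega)
    · rw [if_neg h]
      exact Nat.mod_eq_of_lt (by omega)
  have hrow : ∑ j ∈ univ.erase i₀, |skG i₀ j| = ∑ k ∈ Icc 1 (N - 2), |col k| := by
    refine Finset.sum_nbij'
      (i := fun j : Fin (N - 1) =>
        if (j : ℕ) ≤ (i₀ : ℕ) then (i₀ : ℕ) - j else (i₀ : ℕ) + (N - 1) - j)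
      (j := fun k : ℕ => (⟨((i₀ : ℕ) + (N - 1) - k) % (N - 1), Nat.mod_lt _ h0⟩ : Fin (N - 1)))
      ?_ ?_ ?_ ?_ ?_
    · intro j hjm
      have hj := j.isLt
      have hne : (j : ℕ) ≠ (i₀ : ℕ) := fun h => (mem_erase.mp hjm).1 (Fin.ext h)
      have hlt := i₀.isLt
      simp only [mem_Icc]
      split <;> omega
    · intro k hk
      simp only [mem_Icc] at hk
      have hlt := i₀.isLt
      refine mem_erase.mpr ⟨?_, mem_univ _⟩
      refine Fin.ne_of_val_ne ?_
      simp only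
      rw [hmod k hk.1 hk.2]
      split <;> omega
    · intro j hjm
      have hj := j.isLt
      have hne : (j : ℕ) ≠ (i₀ : ℕ) := fun h => (mem_erase.mp hjm).1 (Fin.ext h)
      have hlt := i₀.isLt
      refine Fin.ext ?_
      simp only
      by_cases h : (j : ℕ) ≤ (i₀ : ℕ)
      · rw [if_pos h, hmod _ (by omega) (by omega)]
        split <;> omega
      · rw [if_neg h, hmod _ (by omega) (by omega)]
        split <;> omega
    · intro k hk
      simp only [mem_Icc] at hk
      have hlt := i₀.isLt
      simp only
      rw [hmod k hk.1 hk.2]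
      by_cases h : k ≤ (i₀ : ℕ)
      · rw [if_pos h]
        rw [if_pos (by omega)]
        omega
      · rw [if_neg h]
        rw [if_neg (by omega)]
        omega
    · intro j hjm
      rw [hskG i₀ j]
      by_cases h : (j : ℕ) ≤ (i₀ : ℕ)
      · simp only [if_pos h]
      · simp only [if_neg h, abs_neg]
  -- bound the row sum
  have hrow_lt : ∑ k ∈ Icc 1 (N - 2), |col k| < c * g 0 := by
    have hsplit : ∑ k ∈ Icc 1 (N - 2), |col k|
        = (∑ k ∈ Ioc 0 ((N - 1) / 2), |col k|)
          + ∑ k ∈ Ioc ((N - 1) / 2) (N - 2), |col k| := by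
      rw [show Icc 1 (N - 2) = Ioc 0 (N - 2) from Finset.Icc_add_one_left_eq_Ioc 0 (N - 2)]
      exact (Finset.sum_Ioc_consecutive _ (Nat.zero_le _) (by omega)).symm
    have hlow : ∑ k ∈ Ioc 0 ((N - 1) / 2), |col k|
        = c * ∑ k ∈ Ioc 0 ((N - 1) / 2), (-g k) := by
      rw [mul_sum]
      refine sum_congr rfl fun k hk => ?_
      simp only [mem_Ioc] at hk
      exact habs_low k hk.1 hk.2
    have hhigh : ∑ k ∈ Ioc ((N - 1) / 2) (N - 2), |col k|
        = c * ∑ k ∈ Ioc 0 ((N - 1) / 2), (-g k) := by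
      rw [mul_sum]
      refine Finset.sum_nbij' (i := fun k => N - 1 - k) (j := fun k => N - 1 - k)
        ?_ ?_ ?_ ?_ ?_
      · intro k hk; simp only [mem_Ioc] at hk ⊢; omega
      · intro k hk; simp only [mem_Ioc] at hk ⊢; omega
      · intro k hk; simp only [mem_Ioc] at hk
        show N - 1 - (N - 1 - k) = k; omega
      · intro k hk; simp only [mem_Ioc] at hk
        show N - 1 - (N - 1 - k) = k; omega
      · intro k hk
        simp only [mem_Ioc] at hk
        exact habs_high k hk.1 hk.2
    have hsub : ∑ k ∈ Ioc 0 ((N - 1) / 2), (-g k) ≤ ∑ k ∈ Icc 1 (N - 2), (-g k) := by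
      refine Finset.sum_le_sum_of_subset_of_nonneg ?_ ?_
      · intro k hk; simp only [mem_Ioc, mem_Icc] at hk ⊢; omega
      · intro k hk hk2
        simp only [mem_Icc] at hk
        have := hg_neg k hk.1 hk.2
        linarith
    rw [hsplit, hlow, hhigh]
    nlinarith [hsum, hsub, hc]
  -- Gershgorin estimate
  have hsplit2 : (μ - (skG i₀ i₀ : ℂ)) * v i₀ = ∑ j ∈ univ.erase i₀, (skG i₀ j : ℂ) * v j := by
    have h := heq i₀
    rw [← Finset.add_sum_erase _ _ (mem_univ i₀)] at h
    linear_combination -h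
  have habs : ‖μ - (skG i₀ i₀ : ℂ)‖ * ‖v i₀‖
      ≤ (∑ j ∈ univ.erase i₀, |skG i₀ j|) * ‖v i₀‖ := by
    rw [← norm_mul, hsplit2]
    calc ‖∑ j ∈ univ.erase i₀, (skG i₀ j : ℂ) * v j‖
        ≤ ∑ j ∈ univ.erase i₀, ‖(skG i₀ j : ℂ) * v j‖ :=
          norm_sum_le _ _
      _ ≤ ∑ j ∈ univ.erase i₀, |skG i₀ j| * ‖v i₀‖ := by
          refine Finset.sum_le_sum fun j _ => ?_
          rw [norm_mul, Complex.norm_real, Real.norm_eq_abs]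
          exact mul_le_mul_of_nonneg_left (hmax j (mem_univ _)) (abs_nonneg _)
      _ = (∑ j ∈ univ.erase i₀, |skG i₀ j|) * ‖v i₀‖ := by
          rw [sum_mul]
  have hgersh : ‖μ - (skG i₀ i₀ : ℂ)‖ ≤ ∑ j ∈ univ.erase i₀, |skG i₀ j| :=
    le_of_mul_le_mul_right habs hvi
  have hre : μ.re - skG i₀ i₀ ≤ ‖μ - (skG i₀ i₀ : ℂ)‖ := by
    have := Complex.re_le_norm (μ - (skG i₀ i₀ : ℂ))
    simpa [Complex.sub_re, Complex.ofReal_re] using this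
  rw [hrow, hii] at hgersh
  rw [hii] at hre
  linarith [hrow_lt, hgersh, hre]
end

section
/- Let α ∈ (1,2), ν = 1 - α/2, γ = 1 + α/2, and let C₆ = ∑_{ℓ=1}^∞ ((ℓ+1)^ν - (ℓ-1)^ν)/ℓ^γ (a finite positive constant depending only on α). Then for the Toeplitz matrix G with coefficients g_k and its Strang-type skew-circulant approximation sk(G), one has ‖sk(G) - G‖_∞ / ‖G‖_∞ < (3/2 + 2ν/(α C₆ N^α))^{-1}. -/
noncomputable def auxA (ν γ : ℝ) (k : ℕ) : ℝ :=
  (((k : ℝ) + 1) ^ ν - ((k : ℝ) - 1) ^ ν) / (k : ℝ) ^ γ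

lemma auxA_nonneg {ν γ : ℝ} (hν : 0 ≤ ν) {k : ℕ} (hk : 1 ≤ k) :
    0 ≤ auxA ν γ k := by
  have h1 : (1:ℝ) ≤ (k:ℝ) := by exact_mod_cast hk
  apply div_nonneg
  · rw [sub_nonneg]
    exact Real.rpow_le_rpow (by linarith) (by linarith) hν
  · exact Real.rpow_nonneg (by positivity) _

lemma real_rpow_add_le {x y p : ℝ} (hx : 0 ≤ x) (hy : 0 ≤ y) (hp : 0 ≤ p)
    (hp1 : p ≤ 1) : (x + y) ^ p ≤ x ^ p + y ^ p := by
  lift x to NNReal using hx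
  lift y to NNReal using hy
  exact_mod_cast NNReal.rpow_add_le_add_rpow x y hp hp1

lemma auxA_le {ν γ : ℝ} (hν : 0 ≤ ν) (hν1 : ν ≤ 1) {k : ℕ} (hk : 1 ≤ k) :
    auxA ν γ k ≤ 2 / (k : ℝ) ^ γ := by
  have h1 : (1:ℝ) ≤ (k:ℝ) := by exact_mod_cast hk
  have hpos : (0:ℝ) < (k:ℝ) ^ γ := Real.rpow_pos_of_pos (by linarith) _
  have hnum : ((k:ℝ) + 1) ^ ν - ((k:ℝ) - 1) ^ ν ≤ 2 := by
    have h2 : ((k:ℝ) + 1) ^ ν ≤ ((k:ℝ) - 1) ^ ν + (2:ℝ) ^ ν := by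
      have := real_rpow_add_le (x := (k:ℝ) - 1) (y := 2) (by linarith) (by norm_num) hν hν1
      simpa [show (k:ℝ) - 1 + 2 = (k:ℝ) + 1 by ring] using this
    have h3 : (2:ℝ) ^ ν ≤ 2 := by
      calc (2:ℝ) ^ ν ≤ (2:ℝ) ^ (1:ℝ) := Real.rpow_le_rpow_of_exponent_le (by norm_num) hν1
      _ = 2 := Real.rpow_one 2
    linarith
  rw [auxA, div_le_div_iff₀ hpos hpos]
  nlinarith

lemma auxA_summable {ν γ : ℝ} (hν : 0 ≤ ν) (hν1 : ν ≤ 1) (hγ : 1 < γ) :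
    Summable (fun ℓ : ℕ => auxA ν γ (ℓ + 1)) := by
  have hb : Summable (fun ℓ : ℕ => 2 / ((ℓ:ℝ) + 1) ^ γ) := by
    have := (Real.summable_one_div_nat_rpow (p := γ)).mpr hγ
    have h2 := ((summable_nat_add_iff 1).mpr this).mul_left 2
    simpa [div_eq_mul_inv] using h2
  apply Summable.of_nonneg_of_le (fun ℓ => auxA_nonneg hν (by omega)) _ hb
  intro ℓ
  have := auxA_le (γ := γ) hν hν1 (k := ℓ + 1) (by omega)
  simpa using this


/-- Maximum absolute row sum norm of a matrix indexed by `Fin n`. -/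
noncomputable def rowSumNorm {n : ℕ} (M : Matrix (Fin n) (Fin n) ℝ) : ℝ :=
  ⨆ i : Fin n, ∑ j : Fin n, |M i j|

theorem skew_circulant_relative_error_bound
    (N : ℕ) (hN : 2 ≤ N) (hNeven : Even N)
    (α : ℝ) (hα : 1 < α) (hα2 : α < 2)
    (γ ν : ℝ) (hγ : γ = 1 + α / 2) (hν : ν = 1 - α / 2)
    (C₆ : ℝ)
    (hC₆ : C₆ = ∑' ℓ : ℕ,
      ((((ℓ : ℝ) + 1) + 1) ^ ν - (((ℓ : ℝ) + 1) - 1) ^ ν) / ((ℓ : ℝ) + 1) ^ γ)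
    (c : ℝ) (hc : 0 < c)
    (g : ℕ → ℝ)
    (hg0 : g 0 = (∑ ℓ ∈ Finset.Icc 1 (N - 1),
        (((ℓ : ℝ) + 1) ^ ν - ((ℓ : ℝ) - 1) ^ ν) / (ℓ : ℝ) ^ γ)
      + ((N : ℝ) ^ ν - ((N : ℝ) - 1) ^ ν) / (N : ℝ) ^ γ
      + 2 * ν / (α * (N : ℝ) ^ α))
    (hgk : ∀ k, 1 ≤ k → k ≤ N - 2 →
      g k = -((((k : ℝ) + 1) ^ ν - ((k : ℝ) - 1) ^ ν) / (2 * (k : ℝ) ^ γ)))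
    (G skG : Matrix (Fin (N - 1)) (Fin (N - 1)) ℝ)
    (hG : ∀ i j : Fin (N - 1),
      G i j = -c * g (Int.natAbs ((i : ℤ) - (j : ℤ))))
    (col : ℕ → ℝ)
    (hcol : ∀ k, k ≤ N - 2 →
      col k = -c * (if k ≤ (N - 1) / 2 then g k else -g (N - 1 - k)))
    (hskG : ∀ i j : Fin (N - 1),
      skG i j = if (j : ℕ) ≤ (i : ℕ) then col ((i : ℕ) - (j : ℕ))
        else -col ((i : ℕ) + (N - 1) - (j : ℕ))) :
    rowSumNorm (skG - G) / rowSumNorm G <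
      (3 / 2 + 2 * ν / (α * C₆ * (N : ℝ) ^ α))⁻¹ := by
  have hν0 : 0 < ν := by rw [hν]; linarith
  have hν1 : ν ≤ 1 := by rw [hν]; linarith
  have hγ1 : 1 < γ := by rw [hγ]; linarith
  have hα0 : 0 < α := by linarith
  obtain ⟨r, hr⟩ := hNeven
  set h : ℕ := (N - 1) / 2 with hh
  have hNh : N = 2 * h + 2 := by omega
  haveI : Nonempty (Fin (N - 1)) := ⟨⟨0, by omega⟩⟩
  set S : ℝ := ∑ ℓ ∈ Finset.Icc 1 (N - 2), auxA ν γ ℓ with hS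
  set d : ℝ := 2 * ν / (α * (N : ℝ) ^ α) with hd
  have hd0 : 0 < d := by
    rw [hd]
    have : (0:ℝ) < (N:ℝ) ^ α := Real.rpow_pos_of_pos (by positivity) _
    positivity
  have hS0 : 0 ≤ S := by
    refine Finset.sum_nonneg fun ℓ hℓ => auxA_nonneg hν0.le ?_
    exact (Finset.mem_Icc.mp hℓ).1
  -- summability and comparison with C₆
  have hsum : Summable (fun ℓ : ℕ => auxA ν γ (ℓ + 1)) := auxA_summable hν0.le hν1 hγ1
  have hC₆' : C₆ = ∑' ℓ : ℕ, auxA ν γ (ℓ + 1) := by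
    rw [hC₆]
    refine tsum_congr fun ℓ => ?_
    rw [auxA]
    push_cast
    ring_nf
  have hSC : S ≤ C₆ := by
    rw [hS, hC₆']
    have hre : ∑ ℓ ∈ Finset.Icc 1 (N - 2), auxA ν γ ℓ
        = ∑ ℓ ∈ Finset.range (N - 2), auxA ν γ (ℓ + 1) := by
      refine Finset.sum_nbij' (fun ℓ => ℓ - 1) (fun ℓ => ℓ + 1) ?_ ?_ ?_ ?_ ?_ <;>
        intro a ha <;> simp [Finset.mem_Icc, Finset.mem_range] at ha ⊢ <;>
        first
          | omega
          | (congr 1; omega)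
    rw [hre]
    refine Summable.sum_le_tsum (Finset.range (N - 2)) (fun ℓ _ => ?_) hsum
    exact auxA_nonneg hν0.le (by omega)
  have hC0 : 0 < C₆ := by
    have h0 : (0:ℝ) < auxA ν γ (0 + 1) := by
      rw [auxA]
      push_cast
      rw [show (1:ℝ) - 1 = 0 by ring, Real.zero_rpow hν0.ne', sub_zero]
      have : (0:ℝ) < (1+1:ℝ) ^ ν := Real.rpow_pos_of_pos (by norm_num) _
      have h1 : (0:ℝ) < (1:ℝ) ^ γ := Real.rpow_pos_of_pos one_pos _
      positivity
    calc (0:ℝ) < auxA ν γ (0 + 1) := h0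
    _ ≤ ∑' ℓ : ℕ, auxA ν γ (ℓ + 1) :=
        Summable.le_tsum hsum 0 fun j _ => auxA_nonneg hν0.le (by omega)
    _ = C₆ := hC₆'.symm
  -- shorthand for g values
  have hgk' : ∀ k, 1 ≤ k → k ≤ N - 2 → g k = -(auxA ν γ k) / 2 := by
    intro k h1 h2
    rw [hgk k h1 h2, auxA]
    ring
  -- lower bound for the denominator
  have hg0nn : S + d ≤ g 0 := by
    rw [hg0]
    have hsplit : ∑ ℓ ∈ Finset.Icc 1 (N - 1),
        (((ℓ : ℝ) + 1) ^ ν - ((ℓ : ℝ) - 1) ^ ν) / (ℓ : ℝ) ^ γ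
        = ∑ ℓ ∈ Finset.Icc 1 (N - 1), auxA ν γ ℓ := rfl
    rw [hsplit]
    have h1 : S ≤ ∑ ℓ ∈ Finset.Icc 1 (N - 1), auxA ν γ ℓ := by
      rw [hS]
      refine Finset.sum_le_sum_of_subset_of_nonneg ?_ fun ℓ hℓ _ => ?_
      · exact Finset.Icc_subset_Icc_right (by omega)
      · exact auxA_nonneg hν0.le (Finset.mem_Icc.mp hℓ).1
    have h2 : 0 ≤ ((N : ℝ) ^ ν - ((N : ℝ) - 1) ^ ν) / (N : ℝ) ^ γ := by
      apply div_nonneg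
      · rw [sub_nonneg]
        refine Real.rpow_le_rpow ?_ (by linarith) hν0.le
        have : (2:ℝ) ≤ (N:ℝ) := by exact_mod_cast hN
        linarith
      · exact Real.rpow_nonneg (by positivity) _
    linarith
  have hden : c * (S + d) ≤ rowSumNorm G := by
    rw [rowSumNorm]
    have i0 : Fin (N - 1) := ⟨0, by omega⟩
    calc c * (S + d) ≤ |G i0 i0| := by
          rw [hG i0 i0]
          simp only [sub_self, Int.natAbs_zero]
          rw [abs_mul, abs_neg, abs_of_pos hc]
          have hg00 : 0 ≤ g 0 := le_trans (by positivity) hg0nn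
          rw [abs_of_nonneg hg00]
          exact mul_le_mul_of_nonneg_left hg0nn hc.le
    _ ≤ ∑ j, |G i0 j| :=
          Finset.single_le_sum (f := fun j : Fin (N - 1) => |G i0 j|)
            (fun j _ => abs_nonneg _) (Finset.mem_univ i0)
    _ ≤ ⨆ i, ∑ j, |G i j| :=
          le_ciSup (f := fun i : Fin (N - 1) => ∑ j, |G i j|)
            (Set.finite_range _).bddAbove i0
  -- upper bound for the numerator rows
  have hrow : ∀ i : Fin (N - 1), ∑ j, |(skG - G) i j| ≤ c / 2 * S := by
    intro i
    set F : ℕ → ℝ := fun k =>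
      if h + 1 ≤ k ∧ k ≤ 2 * h then c / 2 * (auxA ν γ k + auxA ν γ (N - 1 - k)) else 0
      with hF
    have hF0 : ∀ k, 0 ≤ F k := by
      intro k
      rw [hF]
      dsimp only
      split
      · rename_i hk
        have h1 : 0 ≤ auxA ν γ k := auxA_nonneg hν0.le (by omega)
        have h2 : 0 ≤ auxA ν γ (N - 1 - k) := auxA_nonneg hν0.le (by omega)
        positivity
      · exact le_refl 0
    have hentry : ∀ j : Fin (N - 1),
        |(skG - G) i j| ≤ F (Int.natAbs ((i : ℤ) - (j : ℤ))) := by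
      intro j
      have hi1 := i.isLt
      have hj1 := j.isLt
      rw [Matrix.sub_apply, hskG, hG]
      by_cases hji : (j : ℕ) ≤ (i : ℕ)
      · rw [if_pos hji, hcol _ (by omega : (i : ℕ) - (j : ℕ) ≤ N - 2)]
        have hk' : (i : ℕ) - (j : ℕ) = Int.natAbs ((i : ℤ) - (j : ℤ)) := by omega
        rw [hk']
        set k := Int.natAbs ((i : ℤ) - (j : ℤ)) with hkdef
        by_cases hkh : k ≤ (N - 1) / 2
        · rw [if_pos (by omega : k ≤ (N-1)/2)]
          simp only [sub_self, abs_zero]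
          exact hF0 k
        · rw [if_neg (by omega : ¬ k ≤ (N-1)/2)]
          have hcond : h + 1 ≤ k ∧ k ≤ 2 * h := by omega
          rw [hgk' k (by omega) (by omega), hgk' (N - 1 - k) (by omega) (by omega)]
          simp only [hF]
          rw [if_pos hcond]
          have h1 : 0 ≤ auxA ν γ k := auxA_nonneg hν0.le (by omega)
          have h2 : 0 ≤ auxA ν γ (N - 1 - k) := auxA_nonneg hν0.le (by omega)
          rw [show -c * - (-auxA ν γ (N - 1 - k) / 2) - -c * (-auxA ν γ k / 2)
              = -(c / 2 * (auxA ν γ k + auxA ν γ (N - 1 - k))) by ring,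
            abs_neg, abs_of_nonneg (by positivity)]
      · rw [if_neg hji, hcol _ (by omega : (i : ℕ) + (N - 1) - (j : ℕ) ≤ N - 2)]
        have hk' : N - 1 - ((i : ℕ) + (N - 1) - (j : ℕ))
            = Int.natAbs ((i : ℤ) - (j : ℤ)) := by omega
        set k := Int.natAbs ((i : ℤ) - (j : ℤ)) with hkdef
        by_cases hkh : (i : ℕ) + (N - 1) - (j : ℕ) ≤ (N - 1) / 2
        · rw [if_pos (by omega : (i : ℕ) + (N - 1) - (j : ℕ) ≤ (N-1)/2)]
          have hcond : h + 1 ≤ k ∧ k ≤ 2 * h := by omega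
          have he : (i : ℕ) + (N - 1) - (j : ℕ) = N - 1 - k := by omega
          rw [he, hgk' (N - 1 - k) (by omega) (by omega), hgk' k (by omega) (by omega)]
          simp only [hF]
          rw [if_pos hcond]
          have h1 : 0 ≤ auxA ν γ k := auxA_nonneg hν0.le (by omega)
          have h2 : 0 ≤ auxA ν γ (N - 1 - k) := auxA_nonneg hν0.le (by omega)
          rw [show -(-c * (-auxA ν γ (N - 1 - k) / 2)) - -c * (-auxA ν γ k / 2)
              = -(c / 2 * (auxA ν γ k + auxA ν γ (N - 1 - k))) by ring,
            abs_neg, abs_of_nonneg (by positivity)]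
        · rw [if_neg (by omega : ¬ (i : ℕ) + (N - 1) - (j : ℕ) ≤ (N-1)/2), hk']
          rw [show -(-c * -g k) - -c * g k = 0 by ring, abs_zero]
          exact hF0 k
    have hdist : ∀ j : Fin (N - 1), Int.natAbs ((i : ℤ) - (j : ℤ)) ≤ 2 * h := by
      intro j
      have := i.isLt
      have := j.isLt
      omega
    calc ∑ j, |(skG - G) i j| ≤ ∑ j : Fin (N - 1), F (Int.natAbs ((i : ℤ) - (j : ℤ))) :=
          Finset.sum_le_sum fun j _ => hentry j
    _ = ∑ j ∈ Finset.univ.filter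
          (fun j : Fin (N - 1) => h + 1 ≤ Int.natAbs ((i : ℤ) - (j : ℤ))),
          F (Int.natAbs ((i : ℤ) - (j : ℤ))) := by
        refine (Finset.sum_filter_of_ne fun j _ hne => ?_).symm
        by_contra hcon
        refine hne ?_
        simp only [hF]
        rw [if_neg (by omega)]
    _ = ∑ k ∈ (Finset.univ.filter
          (fun j : Fin (N - 1) => h + 1 ≤ Int.natAbs ((i : ℤ) - (j : ℤ)))).image
          (fun j : Fin (N - 1) => Int.natAbs ((i : ℤ) - (j : ℤ))), F k := by
        refine (Finset.sum_image fun x hx y hy hxy => ?_).symm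
        simp only [Finset.mem_coe, Finset.mem_filter] at hx hy
        have := x.isLt
        have := y.isLt
        have := i.isLt
        exact Fin.ext (by omega)
    _ ≤ ∑ k ∈ Finset.Icc (h + 1) (2 * h), F k := by
        refine Finset.sum_le_sum_of_subset_of_nonneg ?_ fun k _ _ => hF0 k
        intro k hk
        simp only [Finset.mem_image, Finset.mem_filter] at hk
        obtain ⟨j, ⟨-, hj⟩, rfl⟩ := hk
        exact Finset.mem_Icc.mpr ⟨hj, hdist j⟩
    _ = c / 2 * S := by
        have hc1 : ∑ k ∈ Finset.Icc (h + 1) (2 * h), F k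
            = c / 2 * ((∑ k ∈ Finset.Icc (h + 1) (2 * h), auxA ν γ k)
              + ∑ k ∈ Finset.Icc (h + 1) (2 * h), auxA ν γ (N - 1 - k)) := by
          rw [← Finset.sum_add_distrib, Finset.mul_sum]
          refine Finset.sum_congr rfl fun k hk => ?_
          simp only [hF]
          rw [if_pos (Finset.mem_Icc.mp hk)]
        have hc2 : ∑ k ∈ Finset.Icc (h + 1) (2 * h), auxA ν γ (N - 1 - k)
            = ∑ k ∈ Finset.Icc 1 h, auxA ν γ k := by
          refine Finset.sum_nbij' (fun k => N - 1 - k) (fun k => N - 1 - k)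
            ?_ ?_ ?_ ?_ ?_ <;>
            intro a ha <;> simp [Finset.mem_Icc] at ha ⊢ <;> omega
        have hc3 : (∑ k ∈ Finset.Icc 1 h, auxA ν γ k)
            + ∑ k ∈ Finset.Icc (h + 1) (2 * h), auxA ν γ k
            = ∑ k ∈ Finset.Icc 1 (2 * h), auxA ν γ k := by
          rw [show Finset.Icc 1 h = Finset.Ioc 0 h from Finset.Icc_add_one_left_eq_Ioc 0 h,
            show Finset.Icc (h + 1) (2 * h) = Finset.Ioc h (2 * h) from
              Finset.Icc_add_one_left_eq_Ioc h (2 * h),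
            show Finset.Icc 1 (2 * h) = Finset.Ioc 0 (2 * h) from
              Finset.Icc_add_one_left_eq_Ioc 0 (2 * h)]
          exact Finset.sum_Ioc_consecutive _ (Nat.zero_le h) (by omega)
        rw [hc1, hc2, hS, show N - 2 = 2 * h by omega]
        rw [add_comm] at hc3
        rw [← hc3]
  -- assemble
  have hnum : rowSumNorm (skG - G) ≤ c / 2 * S := by
    rw [rowSumNorm]
    exact ciSup_le hrow
  have hnum0 : 0 ≤ rowSumNorm (skG - G) := by
    rw [rowSumNorm]
    refine le_ciSup_of_le (Set.finite_range _).bddAbove ⟨0, by omega⟩ ?_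
    exact Finset.sum_nonneg fun j _ => abs_nonneg _
  have hdenpos : (0:ℝ) < c * (S + d) := by positivity
  have hstep : rowSumNorm (skG - G) / rowSumNorm G ≤ (c / 2 * S) / (c * (S + d)) :=
    div_le_div₀ (by positivity) hnum hdenpos hden
  refine hstep.trans_lt ?_
  have hNα : (0:ℝ) < (N:ℝ) ^ α := Real.rpow_pos_of_pos (by positivity) _
  have hrhs : (3 / 2 + 2 * ν / (α * C₆ * (N : ℝ) ^ α))⁻¹
      = 2 * C₆ / (3 * C₆ + 2 * d) := by
    rw [hd]
    rw [show 3 / 2 + 2 * ν / (α * C₆ * (N : ℝ) ^ α)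
        = (3 * C₆ + 2 * (2 * ν / (α * (N : ℝ) ^ α))) / (2 * C₆) by
      field_simp]
    rw [inv_div]
  rw [hrhs]
  rw [div_lt_div_iff₀ hdenpos (by positivity)]
  nlinarith [mul_pos hc hd0, mul_nonneg (mul_nonneg hc.le hS0) hC0.le,
    mul_le_mul_of_nonneg_left hSC (mul_nonneg hc.le hd0.le),
    mul_pos (mul_pos hc hd0) hC0]
end

section
/- Let φ^k be vectors in ℝ^{N-1} equipped with a discrete inner product, let A = -δ_h^α be a symmetric positive definite operator with square root Ã, and define E_h(φ) = (1/4)‖φ‖₄⁴ - (1/2)‖φ‖₂² + (1/4)|Ω| + (ε²/2)‖Ãφ‖₂² and the modified energy 𝓔(p, u) = E_h(p) + (1/(4τ))‖p - u‖_{A^{-1}}² + (1/2)‖p - u‖₂². If the sequence {φ^k} satisfies the modified BDF2 scheme (3φ^{k+1} - 4φ^k + φ^{k-1})/(2τ) = -Aμ^{k+1} with μ^{k+1} = (φ^{k+1})³ - 2φ^k + φ^{k-1} + ε²Aφ^{k+1} + στA(φ^{k+1} - φ^k) and σ ≥ 1/16, then 𝓔(φ^{k+1}, φ^k) ≤ 𝓔(φ^k,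 φ^{k-1}) for all k ≥ 1. -/
open Matrix Finset

private lemma dot_sym {n : ℕ} {M : Matrix (Fin n) (Fin n) ℝ} (hM : M.IsSymm)
    (x y : Fin n → ℝ) : M.mulVec x ⬝ᵥ y = x ⬝ᵥ M.mulVec y := by
  rw [Matrix.dotProduct_mulVec, ← Matrix.mulVec_transpose, hM.eq]

set_option maxHeartbeats 2000000 in
theorem mBDF2_energy_stability
    {n : ℕ} (h τ ε σ Ω : ℝ)
    (hh : 0 < h) (hτ : 0 < τ) (hε : 0 < ε) (hΩ : 0 ≤ Ω) (hσ : 1 / 16 ≤ σ)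
    (A At Ainv : Matrix (Fin n) (Fin n) ℝ)
    (hApos : A.PosDef) (hAsym : A.IsSymm)
    (hAt : At * At = A) (hAtsym : At.IsSymm)
    (hAinv : A * Ainv = 1)
    (φ μ : ℕ → Fin n → ℝ)
    -- discrete energy
    (Eh : (Fin n → ℝ) → ℝ)
    (hEh : ∀ ψ : Fin n → ℝ, Eh ψ =
      (1 / 4) * (h * ∑ i, (ψ i) ^ 4) - (1 / 2) * (h * ∑ i, (ψ i) ^ 2)
        + (1 / 4) * Ω + (ε ^ 2 / 2) * (h * ∑ i, (At.mulVec ψ i) ^ 2))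
    -- modified energy
    (En : (Fin n → ℝ) → (Fin n → ℝ) → ℝ)
    (hEn : ∀ p u : Fin n → ℝ, En p u =
      Eh p + (1 / (4 * τ)) * (h * ∑ i, Ainv.mulVec (p - u) i * (p - u) i)
        + (1 / 2) * (h * ∑ i, ((p - u) i) ^ 2))
    -- the modified BDF2 scheme
    (hscheme1 : ∀ k, 1 ≤ k →
      (3 : ℝ) • φ (k + 1) - (4 : ℝ) • φ k + φ (k - 1) =
        (2 * τ) • (-(A.mulVec (μ (k + 1)))))
    (hscheme2 : ∀ k, 1 ≤ k →
      μ (k + 1) = (fun i => (φ (k + 1) i) ^ 3) - (2 : ℝ) • φ k + φ (k - 1)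
        + ε ^ 2 • A.mulVec (φ (k + 1)) + (σ * τ) • A.mulVec (φ (k + 1) - φ k)) :
    ∀ k, 1 ≤ k → En (φ (k + 1)) (φ k) ≤ En (φ k) (φ (k - 1)) := by
  intro k hk
  have hS1 := hscheme1 k hk
  have hS2 := hscheme2 k hk
  set u : Fin n → ℝ := φ (k + 1) with hu
  set v : Fin n → ℝ := φ k with hv
  set w : Fin n → ℝ := φ (k - 1) with hw
  set m : Fin n → ℝ := μ (k + 1) with hm
  rw [hEn, hEn, hEh, hEh]
  set a : Fin n → ℝ := u - v with ha
  set b : Fin n → ℝ := v - w with hb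
  set c : Fin n → ℝ := Ainv.mulVec a with hc
  set d : Fin n → ℝ := Ainv.mulVec b with hd
  set su : Fin n → ℝ := At.mulVec u with hsu
  set sv : Fin n → ℝ := At.mulVec v with hsv
  set p : Fin n → ℝ := At.mulVec a with hp
  set q : Fin n → ℝ := At.mulVec c with hq
  set r : Fin n → ℝ := At.mulVec d with hr
  set u3 : Fin n → ℝ := fun i => u i ^ 3 with hu3
  -- basic algebra facts
  have hAc : A.mulVec c = a := by
    rw [hc, Matrix.mulVec_mulVec, hAinv, Matrix.one_mulVec]
  have hAd : A.mulVec d = b := by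
    rw [hd, Matrix.mulVec_mulVec, hAinv, Matrix.one_mulVec]
  have hAA : ∀ x y : Fin n → ℝ, A.mulVec x ⬝ᵥ y = At.mulVec x ⬝ᵥ At.mulVec y := by
    intro x y
    rw [← hAt, ← Matrix.mulVec_mulVec, dot_sym hAtsym]
  have huva : u = v + a := by rw [ha]; abel
  have hwvb : w = v - b := by rw [hb]; abel
  -- conversions of sums to dot products
  have conv2 : ∀ x : Fin n → ℝ, ∑ i, (x i) ^ 2 = x ⬝ᵥ x := by
    intro x; simp [dotProduct, pow_two]
  have convm : ∀ x y : Fin n → ℝ, ∑ i, x i * y i = x ⬝ᵥ y := fun x y => rfl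
  rw [conv2 u, conv2 v, conv2 su, conv2 sv, conv2 a, conv2 b, convm c a, convm d b]
  -- scheme identity dotted with c
  have hlhs : (3 : ℝ) • u - (4 : ℝ) • v + w = (3 : ℝ) • a - b := by
    rw [ha, hb]; module
  have hdot := congrArg (fun z => z ⬝ᵥ c) hS1
  simp only [hlhs] at hdot
  have hma : A.mulVec m ⬝ᵥ c = m ⬝ᵥ a := by rw [dot_sym hAsym, hAc]
  have hE1 : 3 * (a ⬝ᵥ c) - b ⬝ᵥ c =
      -(2 * τ) * ((u3 ⬝ᵥ a) - 2 * (v ⬝ᵥ a) + ((v ⬝ᵥ a) - (b ⬝ᵥ a))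
        + ε ^ 2 * ((sv ⬝ᵥ p) + (p ⬝ᵥ p)) + σ * τ * (p ⬝ᵥ p)) := by
    have h1 : ((3 : ℝ) • a - b) ⬝ᵥ c = 3 * (a ⬝ᵥ c) - b ⬝ᵥ c := by
      simp [sub_dotProduct, smul_dotProduct, smul_eq_mul]
    have h2 : ((2 * τ) • (-(A.mulVec m))) ⬝ᵥ c = -(2 * τ) * (m ⬝ᵥ a) := by
      simp only [smul_dotProduct, neg_dotProduct, smul_eq_mul, hma]
      ring
    have h3 : m ⬝ᵥ a = (u3 ⬝ᵥ a) - 2 * (v ⬝ᵥ a) + (w ⬝ᵥ a)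
        + ε ^ 2 * (A.mulVec u ⬝ᵥ a) + σ * τ * (A.mulVec a ⬝ᵥ a) := by
      rw [hS2]
      simp only [sub_dotProduct, add_dotProduct, smul_dotProduct,
        smul_eq_mul]
    have h4 : w ⬝ᵥ a = (v ⬝ᵥ a) - (b ⬝ᵥ a) := by
      rw [hwvb, sub_dotProduct]
    have h5 : A.mulVec u ⬝ᵥ a = (sv ⬝ᵥ p) + (p ⬝ᵥ p) := by
      rw [hAA u a, huva, Matrix.mulVec_add, add_dotProduct, ← hsv, ← hp]
    have h6 : A.mulVec a ⬝ᵥ a = p ⬝ᵥ p := by rw [hAA a a, ← hp]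
    simp only [h1, h2] at hdot
    rw [hdot, h3, h4, h5, h6]
  -- dot product identities
  have hF1 : h * (c ⬝ᵥ a) = h * (q ⬝ᵥ q) := by
    rw [dotProduct_comm c a]
    have : a ⬝ᵥ c = q ⬝ᵥ q := by
      conv_lhs => rw [← hAc]
      rw [hAA c c, ← hq]
    rw [this]
  have hF1b : 2 * h * (a ⬝ᵥ c) = 2 * h * (q ⬝ᵥ q) := by
    have : a ⬝ᵥ c = q ⬝ᵥ q := by
      conv_lhs => rw [← hAc]
      rw [hAA c c, ← hq]
    rw [this]
  have hF2 : h * (d ⬝ᵥ b) = h * (r ⬝ᵥ r) := by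
    rw [dotProduct_comm d b]
    have : b ⬝ᵥ d = r ⬝ᵥ r := by
      conv_lhs => rw [← hAd]
      rw [hAA d d, ← hr]
    rw [this]
  have hF3 : 2 * h * (b ⬝ᵥ c) = 2 * h * (r ⬝ᵥ q) := by
    have : b ⬝ᵥ c = r ⬝ᵥ q := by
      conv_lhs => rw [← hAd]
      rw [hAA d c, ← hr, ← hq]
    rw [this]
  have hF4 : h * τ * (a ⬝ᵥ a) = h * τ * (q ⬝ᵥ p) := by
    have : a ⬝ᵥ a = q ⬝ᵥ p := by
      nth_rewrite 1 [← hAc]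
      rw [hAA c a, ← hq, ← hp]
    rw [this]
  have hF5 : h * τ * (u ⬝ᵥ u) = h * τ * ((v ⬝ᵥ v) + 2 * (v ⬝ᵥ a) + (a ⬝ᵥ a)) := by
    have : u ⬝ᵥ u = (v ⬝ᵥ v) + 2 * (v ⬝ᵥ a) + (a ⬝ᵥ a) := by
      rw [huva]
      simp only [add_dotProduct, dotProduct_add]
      rw [dotProduct_comm a v]
      ring
    rw [this]
  have hF6 : h * τ * ε ^ 2 * (su ⬝ᵥ su)
      = h * τ * ε ^ 2 * ((sv ⬝ᵥ sv) + 2 * (sv ⬝ᵥ p) + (p ⬝ᵥ p)) := by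
    have hsum : su = sv + p := by rw [hsu, hsv, hp, huva, Matrix.mulVec_add]
    have : su ⬝ᵥ su = (sv ⬝ᵥ sv) + 2 * (sv ⬝ᵥ p) + (p ⬝ᵥ p) := by
      rw [hsum]
      simp only [add_dotProduct, dotProduct_add]
      rw [dotProduct_comm p sv]
      ring
    rw [this]
  -- scheme identity multiplied by 2h
  have hE1m := congrArg (fun z => 2 * h * z) hE1
  -- inequalities
  have dot_self_nonneg : ∀ x : Fin n → ℝ, 0 ≤ x ⬝ᵥ x := by
    intro x; exact Finset.sum_nonneg fun i _ => mul_self_nonneg _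
  have hN1 : (1 / 4) * (∑ i, u i ^ 4) - (1 / 4) * (∑ i, v i ^ 4) ≤ u3 ⬝ᵥ a := by
    have : u3 ⬝ᵥ a = ∑ i, u i ^ 3 * (u i - v i) := by
      simp [dotProduct, hu3, ha]
    rw [this, Finset.mul_sum, Finset.mul_sum, ← Finset.sum_sub_distrib]
    apply Finset.sum_le_sum
    intro i _
    nlinarith [mul_nonneg (sq_nonneg (u i - v i)) (sq_nonneg (u i)),
      mul_nonneg (sq_nonneg (u i - v i)) (sq_nonneg (u i + v i))]
  have hN1m := mul_le_mul_of_nonneg_left hN1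
    (le_of_lt (mul_pos hh hτ) : (0:ℝ) ≤ h * τ)
  have hN2 : 2 * (b ⬝ᵥ a) ≤ (a ⬝ᵥ a) + (b ⬝ᵥ b) := by
    have h0 : 0 ≤ (a - b) ⬝ᵥ (a - b) := dot_self_nonneg _
    have : (a - b) ⬝ᵥ (a - b) = (a ⬝ᵥ a) - 2 * (b ⬝ᵥ a) + (b ⬝ᵥ b) := by
      simp only [sub_dotProduct, dotProduct_sub]
      rw [dotProduct_comm a b]
      ring
    linarith [this ▸ h0]
  have hN2m := mul_le_mul_of_nonneg_left hN2
    (le_of_lt (mul_pos hh hτ) : (0:ℝ) ≤ h * τ)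
  have hN3 : 2 * (r ⬝ᵥ q) ≤ (q ⬝ᵥ q) + (r ⬝ᵥ r) := by
    have h0 : 0 ≤ (q - r) ⬝ᵥ (q - r) := dot_self_nonneg _
    have : (q - r) ⬝ᵥ (q - r) = (q ⬝ᵥ q) - 2 * (r ⬝ᵥ q) + (r ⬝ᵥ r) := by
      simp only [sub_dotProduct, dotProduct_sub]
      rw [dotProduct_comm q r]
      ring
    linarith [this ▸ h0]
  have hN3m := mul_le_mul_of_nonneg_left hN3 (le_of_lt hh)
  have hN4 : τ * (q ⬝ᵥ p) ≤ 2 * σ * τ ^ 2 * (p ⬝ᵥ p) + 2 * (q ⬝ᵥ q) := by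
    have step : ∀ i ∈ Finset.univ (α := Fin n),
        τ * (q i * p i) ≤ 2 * σ * τ ^ 2 * (p i * p i) + 2 * (q i * q i) := by
      intro i _
      nlinarith [sq_nonneg (τ * p i - 4 * q i),
        mul_nonneg (mul_nonneg (by linarith : (0:ℝ) ≤ σ - 1/16) (sq_nonneg τ))
          (mul_self_nonneg (p i))]
    calc τ * (q ⬝ᵥ p) = ∑ i, τ * (q i * p i) := by
          rw [dotProduct, Finset.mul_sum]
      _ ≤ ∑ i, (2 * σ * τ ^ 2 * (p i * p i) + 2 * (q i * q i)) :=
          Finset.sum_le_sum step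
      _ = 2 * σ * τ ^ 2 * (p ⬝ᵥ p) + 2 * (q ⬝ᵥ q) := by
          rw [Finset.sum_add_distrib, ← Finset.mul_sum, ← Finset.mul_sum]; rfl
  have hN4m := mul_le_mul_of_nonneg_left hN4 (le_of_lt hh)
  have hN5m : 0 ≤ h * (τ * (ε ^ 2 * (p ⬝ᵥ p))) := by
    have := dot_self_nonneg p
    positivity
  -- clearing the 1/(4τ) factors
  have hτne : τ ≠ 0 := ne_of_gt hτ
  have hCA : 4 * τ * (1 / (4 * τ) * (h * (c ⬝ᵥ a))) = h * (c ⬝ᵥ a) := by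
    field_simp
  have hDB : 4 * τ * (1 / (4 * τ) * (h * (d ⬝ᵥ b))) = h * (d ⬝ᵥ b) := by
    field_simp
  -- final combination
  rw [← sub_nonneg]
  nlinarith [hE1m, hF1, hF1b, hF2, hF3, hF4, hF5, hF6, hN1m, hN2m, hN3m, hN4m,
    hN5m, hCA, hDB, hτ, hh]
end
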